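/- Let n ≥ 1, 0 < θ < n, σ ∈ (θ/n, 1), x₀ ∈ ℝⁿ, r > 0, and let f : ℝⁿ → ℝ be measurable with Morrey bound ∫_{B_ρ(y)} |f|^p dx ≤ K ρ^θ for all y ∈ ℝⁿ, ρ > 0, for some constant K and 1 ≤ p < ∞. Then ∫_{ℝⁿ} |f|^p (M χ_{B_r(x₀)})^σ dx ≤ c(n, θ, σ) K r^θ, where M is the Hardy–Littlewood maximal operator. -/

import Mathlib

set_option linter.unusedSectionVars false
set_option linter.unusedVariables false
set_option linter.deprecated false
set_option linter.unusedTactic false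

open MeasureTheory Metric


noncomputable def avgE (n : ℕ) (x₀ : EuclideanSpace ℝ (Fin n)) (r : ℝ)
    (x : EuclideanSpace ℝ (Fin n)) (ρ : ℝ) : ℝ :=
  (volume (ball x ρ ∩ ball x₀ r)).toReal / (volume (ball x ρ)).toReal

section
variable {n : ℕ} (hn : 1 ≤ n) {x₀ x : EuclideanSpace ℝ (Fin n)} {r ρ ρ' : ℝ}
include hn

lemma nontrivE : Nontrivial (EuclideanSpace ℝ (Fin n)) := by
  haveI : Nonempty (Fin n) := Fin.pos_iff_nonempty.mp hn
  infer_instance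

lemma volume_ballE (hρ : 0 ≤ ρ) :
    volume (ball x ρ) = ENNReal.ofReal (ρ ^ n) * volume (ball (0 : EuclideanSpace ℝ (Fin n)) 1) := by
  haveI := nontrivE hn
  rw [Measure.addHaar_ball volume x hρ, finrank_euclideanSpace_fin]

lemma volume_ballE_toReal (hρ : 0 ≤ ρ) :
    (volume (ball x ρ)).toReal
      = ρ ^ n * (volume (ball (0 : EuclideanSpace ℝ (Fin n)) 1)).toReal := by
  rw [volume_ballE hn hρ, ENNReal.toReal_mul, ENNReal.toReal_ofReal (by positivity)]

omit hn in
lemma unitC_pos : 0 < (volume (ball (0 : EuclideanSpace ℝ (Fin n)) 1)).toReal :=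
  ENNReal.toReal_pos (measure_ball_pos volume _ one_pos).ne' measure_ball_lt_top.ne

lemma avg_eq (hρ : 0 < ρ) :
    (⨍ y in ball x ρ, (ball x₀ r).indicator (fun _ => (1 : ℝ)) y) = avgE n x₀ r x ρ := by
  rw [setAverage_eq, setIntegral_indicator measurableSet_ball, setIntegral_const, avgE]
  simp [div_eq_inv_mul, smul_eq_mul, measureReal_def]

lemma avg_nonneg : 0 ≤ avgE n x₀ r x ρ := by
  exact div_nonneg ENNReal.toReal_nonneg ENNReal.toReal_nonneg

lemma avg_le_one (hρ : 0 < ρ) : avgE n x₀ r x ρ ≤ 1 := by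
  haveI := nontrivE hn
  apply div_le_one_of_le₀
  · exact ENNReal.toReal_mono measure_ball_lt_top.ne (measure_mono Set.inter_subset_left)
  · exact ENNReal.toReal_nonneg

lemma avg_le_ratio (hr : 0 < r) (hρ : 0 < ρ) : avgE n x₀ r x ρ ≤ (r / ρ) ^ n := by
  have h1 : (volume (ball x ρ ∩ ball x₀ r)).toReal ≤ (volume (ball x₀ r)).toReal :=
    ENNReal.toReal_mono measure_ball_lt_top.ne (measure_mono Set.inter_subset_right)
  have hC := unitC_pos (n := n)
  rw [avgE, div_pow, volume_ballE_toReal hn hρ.le]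
  rw [div_le_div_iff₀ (by exact mul_pos (by positivity) hC) (by positivity)]
  calc (volume (ball x ρ ∩ ball x₀ r)).toReal * ρ ^ n
      ≤ (volume (ball x₀ r)).toReal * ρ ^ n := by
        exact mul_le_mul_of_nonneg_right h1 (by positivity)
    _ = r ^ n * (ρ ^ n * (volume (ball (0 : EuclideanSpace ℝ (Fin n)) 1)).toReal) := by
        rw [volume_ballE_toReal hn hr.le]; ring

lemma avg_zero_of_far (h : r + ρ ≤ dist x x₀) : avgE n x₀ r x ρ = 0 := by
  have : ball x ρ ∩ ball x₀ r = ∅ := by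
    apply Set.eq_empty_of_forall_notMem
    rintro y ⟨hy1, hy2⟩
    have := dist_triangle x y x₀
    rw [mem_ball] at hy1 hy2
    rw [dist_comm] at hy1
    linarith [h, hy1, hy2]
  rw [avgE, this]
  simp

lemma avg_eq_ratio_of_subset (hr : 0 < r) (hρ : 0 < ρ) (h : ball x₀ r ⊆ ball x ρ) :
    avgE n x₀ r x ρ = (r / ρ) ^ n := by
  rw [avgE, Set.inter_eq_right.mpr h, div_pow, volume_ballE_toReal hn hρ.le,
    volume_ballE_toReal hn hr.le]
  rw [mul_div_mul_right _ _ (unitC_pos (n := n)).ne']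

lemma avg_mono_ratio (hρ : 0 < ρ) (hρ' : ρ ≤ ρ') :
    avgE n x₀ r x ρ ≤ avgE n x₀ r x ρ' * (ρ' / ρ) ^ n := by
  have hρ'0 : 0 < ρ' := hρ.trans_le hρ'
  have hN : (volume (ball x ρ ∩ ball x₀ r)).toReal ≤ (volume (ball x ρ' ∩ ball x₀ r)).toReal :=
    ENNReal.toReal_mono (ne_of_lt (lt_of_le_of_lt (measure_mono Set.inter_subset_left)
      measure_ball_lt_top)) (measure_mono (Set.inter_subset_inter_left _ (ball_subset_ball hρ')))
  rw [avgE, avgE, div_pow, volume_ballE_toReal hn hρ.le, volume_ballE_toReal hn hρ'0.le]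
  have hC := unitC_pos (n := n)
  have h1 : 0 < ρ ^ n := by positivity
  have h2 : 0 < ρ' ^ n := by positivity
  calc (volume (ball x ρ ∩ ball x₀ r)).toReal / (ρ ^ n * _)
      ≤ (volume (ball x ρ' ∩ ball x₀ r)).toReal / (ρ ^ n *
          (volume (ball (0 : EuclideanSpace ℝ (Fin n)) 1)).toReal) := by
        exact div_le_div_of_nonneg_right hN (by positivity) |>.trans_eq rfl
    _ = (volume (ball x ρ' ∩ ball x₀ r)).toReal /
          (ρ' ^ n * (volume (ball (0 : EuclideanSpace ℝ (Fin n)) 1)).toReal) * (ρ' ^ n / ρ ^ n) := by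
        field_simp

lemma measurable_avg (hr : 0 < r) (hρ : 0 < ρ) :
    Measurable fun x : EuclideanSpace ℝ (Fin n) => avgE n x₀ r x ρ := by
  have heq : (fun x : EuclideanSpace ℝ (Fin n) => avgE n x₀ r x ρ)
      = fun x => (volume (ball x ρ ∩ ball x₀ r)).toReal
          / (ENNReal.ofReal (ρ ^ n) * volume (ball (0 : EuclideanSpace ℝ (Fin n)) 1)).toReal := by
    funext x; rw [avgE, volume_ballE hn hρ.le]
  rw [heq]
  apply Measurable.div_const
  apply ENNReal.measurable_toReal.comp
  have : ∀ x : EuclideanSpace ℝ (Fin n), ball x ρ ∩ ball x₀ r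
      = Prod.mk x ⁻¹' {p : EuclideanSpace ℝ (Fin n) × EuclideanSpace ℝ (Fin n) |
          dist p.2 p.1 < ρ ∧ p.2 ∈ ball x₀ r} := by
    intro x; ext y; simp [mem_ball]
  simp_rw [this]
  apply measurable_measure_prodMk_left
  apply MeasurableSet.inter
  · exact isOpen_lt (continuous_dist.comp (continuous_snd.prodMk continuous_fst)) continuous_const |>.measurableSet
  · exact measurable_snd measurableSet_ball

end

section Max
variable {n : ℕ} (hn : 1 ≤ n) {x₀ x : EuclideanSpace ℝ (Fin n)} {r ρ : ℝ}

lemma le_of_forall_mul_pow {m : ℕ} {a b : ℝ} (hb : 0 ≤ b)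
    (h : ∀ t : ℝ, 1 < t → a ≤ b * t ^ m) : a ≤ b := by
  by_contra hab
  push_neg at hab
  have h1 : Filter.Tendsto (fun t : ℝ => b * t ^ m) (nhdsWithin 1 (Set.Ioi 1)) (nhds b) := by
    have := ((continuous_const.mul (continuous_pow m) : Continuous fun t : ℝ => b * t ^ m)).tendsto (1 : ℝ)
    have h := this.mono_left (nhdsWithin_le_nhds (s := Set.Ioi 1))
    simp only [Pi.mul_apply, one_pow, mul_one] at h
    exact h
  have h2 : ∀ᶠ t in nhdsWithin (1:ℝ) (Set.Ioi 1), b * t ^ m < a :=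
    h1.eventually_lt_const hab
  have h3 : ∀ᶠ t in nhdsWithin (1:ℝ) (Set.Ioi 1), (1:ℝ) < t := self_mem_nhdsWithin
  obtain ⟨t, ht1, ht2⟩ := (h2.and h3).exists
  exact absurd (h t ht2) (not_le.mpr ht1)

noncomputable def MmaxE (n : ℕ) (x₀ : EuclideanSpace ℝ (Fin n)) (r : ℝ)
    (x : EuclideanSpace ℝ (Fin n)) : ℝ :=
  ⨆ ρ : {ρ : ℝ // 0 < ρ}, avgE n x₀ r x ρ

instance : Nonempty {ρ : ℝ // 0 < ρ} := ⟨⟨1, one_pos⟩⟩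
instance : Nonempty {q : ℚ // 0 < q} := ⟨⟨1, one_pos⟩⟩

include hn

lemma bddAbove_avg : BddAbove (Set.range fun ρ : {ρ : ℝ // 0 < ρ} => avgE n x₀ r x ρ) := by
  refine ⟨1, ?_⟩
  rintro _ ⟨ρ, rfl⟩
  exact avg_le_one hn ρ.2

lemma le_Mmax (hρ : 0 < ρ) : avgE n x₀ r x ρ ≤ MmaxE n x₀ r x :=
  le_ciSup (bddAbove_avg hn) ⟨ρ, hρ⟩

lemma Mmax_le {b : ℝ} (h : ∀ ρ : ℝ, 0 < ρ → avgE n x₀ r x ρ ≤ b) : MmaxE n x₀ r x ≤ b :=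
  ciSup_le fun ρ => h ρ ρ.2

lemma Mmax_nonneg : 0 ≤ MmaxE n x₀ r x :=
  le_trans (avg_nonneg hn) (le_Mmax hn one_pos)

lemma Mmax_le_one : MmaxE n x₀ r x ≤ 1 :=
  Mmax_le hn fun ρ hρ => avg_le_one hn hρ

lemma Mmax_pos (hr : 0 < r) : 0 < MmaxE n x₀ r x := by
  have hρ : 0 < dist x x₀ + r := by positivity
  have hsub : ball x₀ r ⊆ ball x (dist x x₀ + r) := by
    intro y hy
    rw [mem_ball] at hy ⊢
    calc dist y x ≤ dist y x₀ + dist x₀ x := dist_triangle _ _ _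
      _ < r + dist x x₀ := by rw [dist_comm x₀ x]; linarith
      _ = dist x x₀ + r := by ring
  have := avg_eq_ratio_of_subset hn hr hρ hsub
  have hpos : (0:ℝ) < (r / (dist x x₀ + r)) ^ n := by positivity
  calc (0:ℝ) < (r / (dist x x₀ + r)) ^ n := hpos
    _ = avgE n x₀ r x (dist x x₀ + r) := this.symm
    _ ≤ MmaxE n x₀ r x := le_Mmax hn hρ

lemma Mmax_eq_ratSup (hr : 0 < r) :
    MmaxE n x₀ r x = ⨆ q : {q : ℚ // 0 < q}, avgE n x₀ r x (q : ℚ) := by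
  have bddq : BddAbove (Set.range fun q : {q : ℚ // 0 < q} => avgE n x₀ r x (q : ℚ)) := by
    refine ⟨1, ?_⟩
    rintro _ ⟨q, rfl⟩
    exact avg_le_one hn (by exact_mod_cast q.2)
  have hMq_nonneg : 0 ≤ ⨆ q : {q : ℚ // 0 < q}, avgE n x₀ r x (q : ℚ) :=
    le_trans (avg_nonneg hn) (le_ciSup bddq ⟨1, one_pos⟩)
  apply le_antisymm
  · apply Mmax_le hn
    intro ρ hρ
    apply le_of_forall_mul_pow (m := n) hMq_nonneg
    intro t ht
    obtain ⟨q, hq1, hq2⟩ := exists_rat_btwn (show ρ < t * ρ by nlinarith)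
    have hq0 : (0:ℝ) < (q:ℝ) := hρ.trans hq1
    have hstep := avg_mono_ratio (x₀ := x₀) (r := r) (x := x) hn hρ hq1.le
    have h2 : avgE n x₀ r x (q:ℝ) ≤ ⨆ q : {q : ℚ // 0 < q}, avgE n x₀ r x (q : ℚ) :=
      le_ciSup bddq ⟨q, by exact_mod_cast hq0⟩
    have h3 : ((q:ℝ) / ρ) ^ n ≤ t ^ n := by
      apply pow_le_pow_left₀ (by positivity)
      rw [div_le_iff₀ hρ]
      nlinarith
    calc avgE n x₀ r x ρ ≤ avgE n x₀ r x (q:ℝ) * ((q:ℝ) / ρ) ^ n := hstep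
      _ ≤ (⨆ q : {q : ℚ // 0 < q}, avgE n x₀ r x (q : ℚ)) * t ^ n := by
          apply mul_le_mul h2 h3 (by positivity) hMq_nonneg
  · apply ciSup_le
    intro q
    exact le_Mmax hn (by exact_mod_cast q.2)

lemma measurable_Mmax (hr : 0 < r) :
    Measurable fun x : EuclideanSpace ℝ (Fin n) => MmaxE n x₀ r x := by
  have : (fun x : EuclideanSpace ℝ (Fin n) => MmaxE n x₀ r x)
      = fun x => ⨆ q : {q : ℚ // 0 < q}, avgE n x₀ r x (q : ℚ) := by
    funext x; exact Mmax_eq_ratSup hn hr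
  rw [this]
  exact Measurable.iSup fun q => measurable_avg hn hr (by exact_mod_cast q.2)

end Max

section Max2
variable {n : ℕ} (hn : 1 ≤ n) {x₀ x : EuclideanSpace ℝ (Fin n)} {r : ℝ}
include hn

lemma Mmax_le_annulus (hr : 0 < r) (k : ℕ) (hx : 2 ^ (k + 1) * r ≤ dist x x₀) :
    MmaxE n x₀ r x ≤ (((2:ℝ) ^ k)⁻¹) ^ n := by
  apply Mmax_le hn
  intro ρ hρ
  have h2k : (1:ℝ) ≤ 2 ^ k := one_le_pow₀ one_le_two
  by_cases hcase : ρ ≤ (2 ^ (k + 1) - 1) * r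
  · have hzero : avgE n x₀ r x ρ = 0 := by
      apply avg_zero_of_far hn
      have : r + ρ ≤ r + (2 ^ (k + 1) - 1) * r := by linarith
      calc r + ρ ≤ 2 ^ (k+1) * r := by linarith [this]; 
        _ ≤ dist x x₀ := hx
    rw [hzero]; positivity
  · push_neg at hcase
    have hge : 2 ^ k * r ≤ ρ := by
      have : (2:ℝ) ^ (k+1) = 2 * 2 ^ k := by ring
      nlinarith
    calc avgE n x₀ r x ρ ≤ (r / ρ) ^ n := avg_le_ratio hn hr hρ
      _ ≤ (((2:ℝ) ^ k)⁻¹) ^ n := by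
          apply pow_le_pow_left₀ (by positivity)
          rw [div_le_iff₀ hρ, inv_mul_eq_div, le_div_iff₀ (by positivity)]
          nlinarith

lemma Mmax_ge_on_ball (hr : 0 < r) {R : ℝ} (hR : 0 < R) (hx : dist x x₀ < R) :
    (r / (R + r)) ^ n ≤ MmaxE n x₀ r x := by
  have hρ : (0:ℝ) < R + r := by positivity
  have hsub : ball x₀ r ⊆ ball x (R + r) := by
    intro y hy
    rw [mem_ball] at hy ⊢
    calc dist y x ≤ dist y x₀ + dist x₀ x := dist_triangle _ _ _
      _ < r + R := by rw [dist_comm x₀ x]; linarith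
      _ = R + r := by ring
  rw [← avg_eq_ratio_of_subset hn hr hρ hsub]
  exact le_Mmax hn hρ

end Max2

/-- If `f` satisfies the Morrey bound `∫_{B_ρ(y)} |f|^p ≤ K ρ^θ` for
all balls, `0 < θ < n`, `σ ∈ (θ/n, 1)`, then weighting by the `σ`-th power of the
maximal function of `χ_{B_r(x₀)}` gives
`∫_{ℝⁿ} |f|^p (M χ_{B_r(x₀)})^σ ≤ c(n,θ,σ) K r^θ`. -/
theorem integral_against_maximal_power (n : ℕ) (hn : 1 ≤ n) (θ σ : ℝ)
    (hθ : 0 < θ) (hθn : θ < n) (hσ : θ / n < σ) (hσ1 : σ < 1) :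
    ∃ c : ℝ, 0 < c ∧
      ∀ (p : ℝ), 1 ≤ p → ∀ (f : EuclideanSpace ℝ (Fin n) → ℝ) (K : ℝ),
        (∀ (y : EuclideanSpace ℝ (Fin n)) (ρ : ℝ), 0 < ρ →
          (∫ x in ball y ρ, |f x| ^ p) ≤ K * ρ ^ θ) →
        ∀ (x₀ : EuclideanSpace ℝ (Fin n)) (r : ℝ), 0 < r →
          (∫ x, |f x| ^ p *
              (⨆ ρ : {ρ : ℝ // 0 < ρ},
                ⨍ y in ball x (ρ : ℝ), (ball x₀ r).indicator (fun _ => (1 : ℝ)) y) ^ σ) ≤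
            c * K * r ^ θ := by
  classical
  have hσ0 : 0 < σ := lt_of_le_of_lt (by positivity) hσ
  have hn0 : (0:ℝ) < n := by exact_mod_cast hn
  have hθσ : θ < n * σ := by
    rw [div_lt_iff₀ hn0] at hσ
    linarith
  set q : ℝ := (2:ℝ) ^ (θ - n * σ) with hqdef
  have hq0 : 0 < q := Real.rpow_pos_of_pos two_pos _
  have hq1 : q < 1 := Real.rpow_lt_one_of_one_lt_of_neg one_lt_two (by linarith)
  refine ⟨(2:ℝ) ^ (n * σ + θ) * (1 - q)⁻¹, ?_, ?_⟩
  · have h1 : (0:ℝ) < (2:ℝ) ^ (n * σ + θ) := Real.rpow_pos_of_pos two_pos _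
    have h2 : (0:ℝ) < 1 - q := by linarith
    positivity
  intro p hp f K hf x₀ r hr
  -- K is nonnegative
  have hK : 0 ≤ K := by
    have h1 := hf x₀ 1 one_pos
    have h2 : 0 ≤ ∫ x in ball x₀ 1, |f x| ^ p :=
      integral_nonneg fun x => Real.rpow_nonneg (abs_nonneg _) p
    have := h2.trans h1
    rwa [Real.one_rpow, mul_one] at this
  have hrθ : (0:ℝ) < r ^ θ := Real.rpow_pos_of_pos hr θ
  -- rewrite the integrand using MmaxE
  have hrw : ∀ x : EuclideanSpace ℝ (Fin n),
      (⨆ ρ : {ρ : ℝ // 0 < ρ},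
        ⨍ y in ball x (ρ : ℝ), (ball x₀ r).indicator (fun _ => (1 : ℝ)) y) = MmaxE n x₀ r x := by
    intro x
    rw [MmaxE]
    exact iSup_congr fun ρ => avg_eq hn ρ.2
  simp only [hrw]
  set g : EuclideanSpace ℝ (Fin n) → ℝ := fun x => |f x| ^ p * (MmaxE n x₀ r x) ^ σ with hgdef
  have hg_nonneg : ∀ x, 0 ≤ g x := fun x =>
    mul_nonneg (Real.rpow_nonneg (abs_nonneg _) p) (Real.rpow_nonneg (Mmax_nonneg hn) σ)
  by_cases hgi : Integrable g volume
  swap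
  · rw [integral_undef hgi]
    have h1 : (0:ℝ) < (2:ℝ) ^ (n * σ + θ) := Real.rpow_pos_of_pos two_pos _
    have h2 : (0:ℝ) < 1 - q := by linarith
    positivity
  -- measurability of |f|^p
  have hMpos : ∀ x, 0 < MmaxE n x₀ r x := fun x => Mmax_pos hn hr
  have hfp_meas : AEStronglyMeasurable (fun x => |f x| ^ p) volume := by
    have heq : (fun x => |f x| ^ p) = fun x => g x / (MmaxE n x₀ r x) ^ σ := by
      funext x
      rw [hgdef]
      have hne := (Real.rpow_pos_of_pos (hMpos x) σ).ne'
      field_simp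
    rw [heq]
    have hMσ : Measurable fun x => (MmaxE n x₀ r x) ^ σ :=
      (Real.continuous_rpow_const hσ0.le).measurable.comp (measurable_Mmax hn hr)
    exact (hgi.aemeasurable.div hMσ.aemeasurable).aestronglyMeasurable
  -- integrability of |f|^p on balls centered at x₀
  have hfp_int : ∀ R : ℝ, 0 < R → IntegrableOn (fun x => |f x| ^ p) (ball x₀ R) volume := by
    intro R hR
    set m : ℝ := ((r / (R + r)) ^ n) ^ σ with hmdef
    have hm : 0 < m := Real.rpow_pos_of_pos (by positivity) σ
    apply Integrable.mono' ((hgi.restrict (s := ball x₀ R)).mul_const m⁻¹)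
      hfp_meas.restrict
    rw [ae_restrict_iff' measurableSet_ball]
    apply ae_of_all
    intro x hx
    have h1 : (r / (R + r)) ^ n ≤ MmaxE n x₀ r x :=
      Mmax_ge_on_ball hn hr hR (mem_ball.mp hx)
    have h2 : m ≤ (MmaxE n x₀ r x) ^ σ :=
      Real.rpow_le_rpow (by positivity) h1 hσ0.le
    rw [Real.norm_of_nonneg (Real.rpow_nonneg (abs_nonneg _) p)]
    rw [← div_eq_mul_inv, le_div_iff₀ hm]
    calc |f x| ^ p * m ≤ |f x| ^ p * (MmaxE n x₀ r x) ^ σ :=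
          mul_le_mul_of_nonneg_left h2 (Real.rpow_nonneg (abs_nonneg _) p)
      _ = g x := rfl
  -- the dyadic decomposition
  set B : ℕ → Set (EuclideanSpace ℝ (Fin n)) := fun k => ball x₀ (2 ^ (k + 1) * r) with hBdef
  have hBmono : Monotone B := by
    intro i j hij
    apply ball_subset_ball
    apply mul_le_mul_of_nonneg_right _ hr.le
    exact pow_le_pow_right₀ one_le_two (by omega)
  set S : ℕ → Set (EuclideanSpace ℝ (Fin n)) := disjointed B with hSdef
  have hSmeas : ∀ k, MeasurableSet (S k) :=
    MeasurableSet.disjointed fun k => measurableSet_ball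
  have hSdisj : Pairwise (Function.onFun Disjoint S) := disjoint_disjointed B
  have hSsub : ∀ k, S k ⊆ B k := fun k => disjointed_subset B k
  have hSUnion : (⋃ k, S k) = Set.univ := by
    rw [hSdef, iUnion_disjointed]
    ext x
    simp only [Set.mem_iUnion, Set.mem_univ, iff_true]
    obtain ⟨k, hk⟩ := pow_unbounded_of_one_lt (R := ℝ) (dist x x₀ / r) one_lt_two
    refine ⟨k, mem_ball.mpr ?_⟩
    rw [div_lt_iff₀ hr] at hk
    have : (2:ℝ) ^ k ≤ 2 ^ (k + 1) := pow_le_pow_right₀ one_le_two (by omega)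
    nlinarith
  -- pointwise bound for M^σ on S k
  have hboundσ : ∀ k : ℕ, ∀ x ∈ S k,
      (MmaxE n x₀ r x) ^ σ ≤ (2:ℝ) ^ ((1 - (k:ℝ)) * n * σ) := by
    intro k x hx
    have hM1 : MmaxE n x₀ r x ≤ (2:ℝ) ^ ((1 - (k:ℝ)) * n) := by
      cases k with
      | zero =>
        simp only [Nat.cast_zero, sub_zero, one_mul]
        calc MmaxE n x₀ r x ≤ 1 := Mmax_le_one hn
          _ ≤ (2:ℝ) ^ (n:ℝ) := Real.one_le_rpow one_le_two (by positivity)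
      | succ j =>
        rw [Nat.cast_succ]
        have hxd : 2 ^ (j + 1) * r ≤ dist x x₀ := by
          have hx2 : x ∈ B (j+1) \ B j := by
            rw [← hBmono.disjointed_add_one j]
            exact hx
          have := hx2.2
          rw [hBdef] at this
          simp only [mem_ball, not_lt] at this
          exact this
        calc MmaxE n x₀ r x ≤ (((2:ℝ) ^ j)⁻¹) ^ n := Mmax_le_annulus hn hr j hxd
          _ = (2:ℝ) ^ ((1 - ((j:ℝ)+1)) * n) := by
              rw [← Real.rpow_natCast (2:ℝ) j, ← Real.rpow_neg (by norm_num),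
                ← Real.rpow_natCast ((2:ℝ) ^ (-(j:ℝ))) n, ← Real.rpow_mul (by norm_num)]
              congr 1
              push_cast
              ring
    calc (MmaxE n x₀ r x) ^ σ ≤ ((2:ℝ) ^ ((1 - (k:ℝ)) * n)) ^ σ :=
          Real.rpow_le_rpow (Mmax_nonneg hn) hM1 hσ0.le
      _ = (2:ℝ) ^ ((1 - (k:ℝ)) * n * σ) := by
          rw [← Real.rpow_mul (by norm_num)]
  -- per-piece integral bound
  have hterm : ∀ k : ℕ, (∫ x in S k, g x) ≤ K * r ^ θ * (2:ℝ) ^ (n * σ + θ) * q ^ k := by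
    intro k
    set γ : ℝ := (2:ℝ) ^ ((1 - (k:ℝ)) * n * σ) with hγdef
    have hγ0 : 0 < γ := Real.rpow_pos_of_pos two_pos _
    have hRk : (0:ℝ) < 2 ^ (k + 1) * r := by positivity
    have hint : IntegrableOn (fun x => |f x| ^ p) (B k) volume := hfp_int _ hRk
    have h1 : (∫ x in S k, g x) ≤ ∫ x in S k, γ * |f x| ^ p := by
      apply integral_mono_of_nonneg (ae_of_all _ hg_nonneg)
      · exact ((hint.mono_set (hSsub k)).const_mul γ)
      · apply (ae_restrict_iff' (hSmeas k)).mpr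
        apply ae_of_all
        intro x hx
        calc g x = |f x| ^ p * (MmaxE n x₀ r x) ^ σ := rfl
          _ ≤ |f x| ^ p * γ :=
              mul_le_mul_of_nonneg_left (hboundσ k x hx) (Real.rpow_nonneg (abs_nonneg _) p)
          _ = γ * |f x| ^ p := mul_comm _ _
    have h2 : (∫ x in S k, |f x| ^ p) ≤ ∫ x in B k, |f x| ^ p := by
      apply setIntegral_mono_set hint
      · exact ae_of_all _ fun x => Real.rpow_nonneg (abs_nonneg _) p
      · exact HasSubset.Subset.eventuallyLE (hSsub k)
    have h3 : (∫ x in B k, |f x| ^ p) ≤ K * (2 ^ (k + 1) * r) ^ θ := hf x₀ _ hRk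
    have h4 : (∫ x in S k, g x) ≤ γ * (K * (2 ^ (k + 1) * r) ^ θ) := by
      rw [integral_const_mul] at h1
      calc (∫ x in S k, g x) ≤ γ * ∫ x in S k, |f x| ^ p := h1
        _ ≤ γ * (K * (2 ^ (k + 1) * r) ^ θ) := by
            apply mul_le_mul_of_nonneg_left (h2.trans h3) hγ0.le
    refine h4.trans_eq ?_
    -- algebra of powers of two
    rw [hγdef, Real.mul_rpow (by positivity) hr.le,
      ← Real.rpow_natCast (2:ℝ) (k+1), ← Real.rpow_mul (by norm_num : (0:ℝ) ≤ 2)]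
    have hexp : (2:ℝ) ^ ((1 - (k:ℝ)) * ↑n * σ) * 2 ^ ((↑(k+1):ℝ) * θ)
        = (2:ℝ) ^ ((n:ℝ) * σ + θ) * 2 ^ ((θ - ↑n * σ) * ↑k) := by
      rw [← Real.rpow_add two_pos, ← Real.rpow_add two_pos]
      congr 1
      push_cast
      ring
    have hq' : q ^ k = (2:ℝ) ^ ((θ - (n:ℝ) * σ) * ↑k) := by
      rw [hqdef, ← Real.rpow_natCast ((2:ℝ) ^ (θ - (n:ℝ) * σ)) k,
        ← Real.rpow_mul (by norm_num : (0:ℝ) ≤ 2)]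
    rw [hq']
    linear_combination (K * r ^ θ) * hexp
  -- sum up
  have hIntUnion : IntegrableOn g (⋃ k, S k) volume := by
    rw [hSUnion]
    exact integrableOn_univ.mpr hgi
  have hHasSum : HasSum (fun k => ∫ x in S k, g x) (∫ x, g x) := by
    have := hasSum_integral_iUnion hSmeas hSdisj hIntUnion
    rwa [hSUnion, Measure.restrict_univ] at this
  have hSummable_rhs : Summable (fun k : ℕ => K * r ^ θ * (2:ℝ) ^ (n * σ + θ) * q ^ k) :=
    (summable_geometric_of_lt_one hq0.le hq1).mul_left _
  have htsum : (∫ x, g x) = ∑' k, ∫ x in S k, g x := hHasSum.tsum_eq.symm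
  rw [htsum]
  calc (∑' k, ∫ x in S k, g x)
      ≤ ∑' k : ℕ, K * r ^ θ * (2:ℝ) ^ (n * σ + θ) * q ^ k :=
        Summable.tsum_le_tsum hterm hHasSum.summable hSummable_rhs
    _ = K * r ^ θ * (2:ℝ) ^ (n * σ + θ) * (1 - q)⁻¹ := by
        rw [tsum_mul_left, tsum_geometric_of_lt_one hq0.le hq1]
    _ = (2:ℝ) ^ (n * σ + θ) * (1 - q)⁻¹ * K * r ^ θ := by ring
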